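/- In SupLinUCB-S, for each stage s ∈ [S], each round t ∈ [T], and any fixed sequence of context vectors x_t: restricted to the rounds t with t ∈ Ψ_{I_t,t}^s (the rounds added to a stage-s index set), the corresponding rewards r_{I_t,t} are independent random variables with E[r_{I_t,t}] = θ_{I_t}^T x_t. -/

import Mathlib

/-!
SupLinUCB-S: the SupLinUCB-based ex-post monotone allocation rule for single-slot
sponsored search auctions.

Parameters are collected in `SupParams`: bids `b`, learning parameter `α`, horizon
`T`, number of stages `S`, and the context sequence `x`.  The click realization
`ρ : ℕ → Fin n → Bool` tells whether agent `i`'s ad would be clicked if displayed at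
round `t`.  `supPsi P ρ t i s` is the stage-`s` index set `Ψ_{i,t}^s` of agent `i` at
the beginning of round `t` (rounds numbered `0, 1, …`; `supPsi P ρ P.T` is the final
family `Ψ_{·,T+1}^·`), `supSelect P ρ t` is the agent selected at round `t`, and
`supActive P ρ t s` is the set `Â_s` of stage `s` at round `t`.
-/

open Matrix
open scoped Classical

structure SupParams (n d : ℕ) where
  b : Fin n → ℝ
  α : ℝ
  T : ℕ
  S : ℕ
  x : ℕ → Fin d → ℝ

variable {n d : ℕ} [NeZero n]

/-- The designated (round-robin) agent of round `t`. -/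
def desig (n : ℕ) [NeZero n] (t : ℕ) : Fin n :=
  ⟨t % n, Nat.mod_lt t (NeZero.pos n)⟩

/-- `A_{i,t} = I_d + ∑_{τ ∈ Ψ_{i,t}^s} x_τ x_τᵀ` (BaseLinUCB-S). -/
noncomputable def supA (P : SupParams n d) (Ψ : Fin n → ℕ → Finset ℕ)
    (i : Fin n) (s : ℕ) : Matrix (Fin d) (Fin d) ℝ :=
  1 + ∑ τ ∈ Ψ i s, vecMulVec (P.x τ) (P.x τ)

/-- `c_{i,t} = ∑_{τ ∈ Ψ_{i,t}^s} r_{i,τ} x_τ` (BaseLinUCB-S). -/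
noncomputable def supCvec (P : SupParams n d) (ρ : ℕ → Fin n → Bool)
    (Ψ : Fin n → ℕ → Finset ℕ) (i : Fin n) (s : ℕ) : Fin d → ℝ :=
  ∑ τ ∈ Ψ i s, (if ρ τ i then (1 : ℝ) else 0) • P.x τ

/-- The width `w_{i,t}^s = α √(x_tᵀ A_{i,t}⁻¹ x_t)`. -/
noncomputable def wIn (P : SupParams n d) (Ψ : Fin n → ℕ → Finset ℕ)
    (t : ℕ) (i : Fin n) (s : ℕ) : ℝ :=
  P.α * Real.sqrt (P.x t ⬝ᵥ ((supA P Ψ i s)⁻¹ *ᵥ P.x t))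

/-- The estimate `r̂_{i,t}^s = θ_{i,t}ᵀ x_t` with `θ_{i,t} = A_{i,t}⁻¹ c_{i,t}`. -/
noncomputable def rhatIn (P : SupParams n d) (ρ : ℕ → Fin n → Bool)
    (Ψ : Fin n → ℕ → Finset ℕ) (t : ℕ) (i : Fin n) (s : ℕ) : ℝ :=
  ((supA P Ψ i s)⁻¹ *ᵥ supCvec P ρ Ψ i s) ⬝ᵥ P.x t

/-- The score `b_i (r̂_{i,t}^s + w_{i,t}^s)`. -/
noncomputable def scoreIn (P : SupParams n d) (ρ : ℕ → Fin n → Bool)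
    (Ψ : Fin n → ℕ → Finset ℕ) (t : ℕ) (i : Fin n) (s : ℕ) : ℝ :=
  P.b i * (rhatIn P ρ Ψ t i s + wIn P Ψ t i s)

/-- The active sets `Â_s` of the inner loop of SupLinUCB-S at round `t`
(`Â_1 = N`; `Â_{s+1}` is obtained from `Â_s` by the elimination rule (iii) when the
loop advances from stage `s` to stage `s+1`, i.e. when none of the stopping rules
(i), (ii), (iv) fires at stage `s`). -/
noncomputable def actIn (P : SupParams n d) (ρ : ℕ → Fin n → Bool)
    (Ψ : Fin n → ℕ → Finset ℕ) (t : ℕ) : ℕ → Finset (Fin n)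
  | 0 => Finset.univ
  | 1 => Finset.univ
  | (s + 1) =>
    let act := actIn P ρ Ψ t s
    if (desig n t ∈ act ∧ (2 : ℝ) ^ (-(s : ℤ)) < wIn P Ψ t (desig n t) s) ∨
       (∀ i ∈ act, wIn P Ψ t i s ≤ 1 / Real.sqrt P.T) ∨
       ¬ (∀ i ∈ act, wIn P Ψ t i s ≤ (2 : ℝ) ^ (-(s : ℤ)))
    then act
    else act.filter (fun i => ∀ a ∈ act,
      scoreIn P ρ Ψ t a s - (2 : ℝ) ^ (1 - (s : ℤ)) ≤ scoreIn P ρ Ψ t i s)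

/-- Rule (i) fires at stage `s`: the designated agent `j` is in `Â_s` and
`w_{j,t}^s > 2^{-s}` (select `j` and learn). -/
def condI (P : SupParams n d) (ρ : ℕ → Fin n → Bool)
    (Ψ : Fin n → ℕ → Finset ℕ) (t s : ℕ) : Prop :=
  desig n t ∈ actIn P ρ Ψ t s ∧ (2 : ℝ) ^ (-(s : ℤ)) < wIn P Ψ t (desig n t) s

/-- Rule (ii) fires at stage `s`: `w_{i,t}^s ≤ 1/√T` for all `i ∈ Â_s`
(exploit, no update). -/
def condII (P : SupParams n d) (ρ : ℕ → Fin n → Bool)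
    (Ψ : Fin n → ℕ → Finset ℕ) (t s : ℕ) : Prop :=
  ∀ i ∈ actIn P ρ Ψ t s, wIn P Ψ t i s ≤ 1 / Real.sqrt P.T

/-- The condition of rule (iii) at stage `s`: `w_{i,t}^s ≤ 2^{-s}` for all `i ∈ Â_s`
(eliminate and advance the stage). -/
def condIII (P : SupParams n d) (ρ : ℕ → Fin n → Bool)
    (Ψ : Fin n → ℕ → Finset ℕ) (t s : ℕ) : Prop :=
  ∀ i ∈ actIn P ρ Ψ t s, wIn P Ψ t i s ≤ (2 : ℝ) ^ (-(s : ℤ))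

/-- The stage at which the inner loop of round `t` stops, i.e. the first stage
`s ∈ {1, …, S}` at which one of the rules (i), (ii), (iv) fires. -/
noncomputable def stopIn (P : SupParams n d) (ρ : ℕ → Fin n → Bool)
    (Ψ : Fin n → ℕ → Finset ℕ) (t : ℕ) : ℕ :=
  (((Finset.Icc 1 P.S).filter fun s =>
      condI P ρ Ψ t s ∨ condII P ρ Ψ t s ∨ ¬ condIII P ρ Ψ t s).min).untopD P.S

/-- The agent selected at round `t`: the designated agent if rule (i) fires at the
stopping stage, and otherwise (rules (ii)/(iv)) the agent of `Â_s` maximizing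
`b_i (r̂_{i,t}^s + w_{i,t}^s)`. -/
noncomputable def selectIn (P : SupParams n d) (ρ : ℕ → Fin n → Bool)
    (Ψ : Fin n → ℕ → Finset ℕ) (t : ℕ) : Fin n :=
  let s := stopIn P ρ Ψ t
  if condI P ρ Ψ t s then desig n t
  else
    (((actIn P ρ Ψ t s).filter fun i => ∀ a ∈ actIn P ρ Ψ t s,
        scoreIn P ρ Ψ t a s ≤ scoreIn P ρ Ψ t i s).min).untopD (desig n t)

/-- `some s` if at round `t` the algorithm learns (rule (i)) at stage `s`,
`none` if no index set is updated at round `t`. -/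
noncomputable def learnIn (P : SupParams n d) (ρ : ℕ → Fin n → Bool)
    (Ψ : Fin n → ℕ → Finset ℕ) (t : ℕ) : Option ℕ :=
  if condI P ρ Ψ t (stopIn P ρ Ψ t) then some (stopIn P ρ Ψ t) else none

/-- The index sets `Ψ_{i,t}^s` at the beginning of round `t`. -/
noncomputable def supPsi (P : SupParams n d) (ρ : ℕ → Fin n → Bool) :
    ℕ → Fin n → ℕ → Finset ℕ
  | 0 => fun _ _ => ∅
  | t + 1 =>
    let Ψ := supPsi P ρ t
    match learnIn P ρ Ψ t with
    | none => Ψ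
    | some s => fun i s' => if i = desig n t ∧ s' = s then insert t (Ψ i s') else Ψ i s'

/-- The agent `I_t` selected by SupLinUCB-S at round `t`. -/
noncomputable def supSelect (P : SupParams n d) (ρ : ℕ → Fin n → Bool) (t : ℕ) : Fin n :=
  selectIn P ρ (supPsi P ρ t) t

/-- The active set `Â_s` at round `t`. -/
noncomputable def supActive (P : SupParams n d) (ρ : ℕ → Fin n → Bool) (t s : ℕ) :
    Finset (Fin n) :=
  actIn P ρ (supPsi P ρ t) t s

/-- The width `w_{i,t}^s` at round `t`. -/
noncomputable def supWidth (P : SupParams n d) (ρ : ℕ → Fin n → Bool)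
    (t : ℕ) (i : Fin n) (s : ℕ) : ℝ :=
  wIn P (supPsi P ρ t) t i s

/-- The upper confidence bound `ucb_{i,t}^s = r̂_{i,t}^s + w_{i,t}^s` at round `t`. -/
noncomputable def supUcb (P : SupParams n d) (ρ : ℕ → Fin n → Bool)
    (t : ℕ) (i : Fin n) (s : ℕ) : ℝ :=
  rhatIn P ρ (supPsi P ρ t) t i s + wIn P (supPsi P ρ t) t i s

/-- The stage at which the inner loop of round `t` stops. -/
noncomputable def supStop (P : SupParams n d) (ρ : ℕ → Fin n → Bool) (t : ℕ) : ℕ :=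
  stopIn P ρ (supPsi P ρ t) t

/-- Rule (i) fires at round `t`, stage `s`. -/
def supCondI (P : SupParams n d) (ρ : ℕ → Fin n → Bool) (t s : ℕ) : Prop :=
  condI P ρ (supPsi P ρ t) t s

/-- Rule (ii) fires at round `t`, stage `s`. -/
def supCondII (P : SupParams n d) (ρ : ℕ → Fin n → Bool) (t s : ℕ) : Prop :=
  condII P ρ (supPsi P ρ t) t s

/-- `ν_i(b, t)`: the number of clicks received by agent `i` in the first `t` rounds. -/
noncomputable def supClicks (P : SupParams n d) (ρ : ℕ → Fin n → Bool)
    (i : Fin n) (t : ℕ) : ℕ :=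
  ((Finset.range t).filter (fun u => supSelect P ρ u = i ∧ ρ u i = true)).card

/-- The agent with the highest expected valuation for the context of round `t`:
`i*_t = argmax_i b_i (θ_iᵀ x_t)`. -/
noncomputable def supIstar (P : SupParams n d) (θ : Fin n → Fin d → ℝ) (t : ℕ) : Fin n :=
  ((Finset.univ.filter fun i : Fin n => ∀ k : Fin n,
      P.b k * (θ k ⬝ᵥ P.x t) ≤ P.b i * (θ i ⬝ᵥ P.x t)).min).untopD (desig n t)

open MeasureTheory ProbabilityTheory


/-! ### Auxiliary lemmas for the proof -/

-- Section 1: basic supPsi lemmas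
section AlgLemmas
variable {n d : ℕ} [NeZero n] (P : SupParams n d) (c : ℕ → Fin n → Bool)

lemma supPsi_succ (t : ℕ) : supPsi P c (t + 1) =
    (match learnIn P c (supPsi P c t) t with
    | none => supPsi P c t
    | some s => fun i s' => if i = desig n t ∧ s' = s then insert t (supPsi P c t i s')
        else supPsi P c t i s') := by
  rw [supPsi]

lemma mem_supPsi_iff {τ t : ℕ} {i : Fin n} {σ : ℕ} :
    τ ∈ supPsi P c t i σ ↔
      τ < t ∧ learnIn P c (supPsi P c τ) τ = some σ ∧ i = desig n τ := by
  induction t with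
  | zero => simp [supPsi]
  | succ t ih =>
    rw [supPsi_succ]
    rcases h' : learnIn P c (supPsi P c t) t with _ | s
    · simp only
      rw [ih]
      constructor
      · rintro ⟨h1, h2, h3⟩; exact ⟨Nat.lt_succ_of_lt h1, h2, h3⟩
      · rintro ⟨h1, h2, h3⟩
        refine ⟨?_, h2, h3⟩
        rcases Nat.lt_succ_iff_lt_or_eq.mp h1 with h | rfl
        · exact h
        · rw [h2] at h'; cases h'
    · simp only
      by_cases hc : i = desig n t ∧ σ = s
      · rw [if_pos hc, Finset.mem_insert, ih]
        constructor
        · rintro (rfl | ⟨h1, h2, h3⟩)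
          · exact ⟨Nat.lt_succ_self _, by rw [h', hc.2], hc.1⟩
          · exact ⟨Nat.lt_succ_of_lt h1, h2, h3⟩
        · rintro ⟨h1, h2, h3⟩
          rcases Nat.lt_succ_iff_lt_or_eq.mp h1 with h | rfl
          · exact Or.inr ⟨h, h2, h3⟩
          · exact Or.inl rfl
      · rw [if_neg hc, ih]
        constructor
        · rintro ⟨h1, h2, h3⟩; exact ⟨Nat.lt_succ_of_lt h1, h2, h3⟩
        · rintro ⟨h1, h2, h3⟩
          refine ⟨?_, h2, h3⟩
          rcases Nat.lt_succ_iff_lt_or_eq.mp h1 with h | rfl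
          · exact h
          · rw [h2] at h'; cases h'; exact absurd ⟨h3, rfl⟩ hc

lemma mem_supPsi_lt {τ t : ℕ} {i : Fin n} {σ : ℕ} (h : τ ∈ supPsi P c t i σ) : τ < t :=
  ((mem_supPsi_iff P c).mp h).1

end AlgLemmas
section Congr
set_option linter.unusedSectionVars false
set_option linter.unusedVariables false
variable {n d : ℕ} [NeZero n] (P : SupParams n d) (c c' : ℕ → Fin n → Bool)
  (Ψ Ψ' : Fin n → ℕ → Finset ℕ)

lemma supCvec_congr {i : Fin n} {σ : ℕ} (hψ : Ψ i σ = Ψ' i σ)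
    (hc : ∀ τ ∈ Ψ i σ, c τ i = c' τ i) :
    supCvec P c Ψ i σ = supCvec P c' Ψ' i σ := by
  unfold supCvec
  rw [← hψ]
  exact Finset.sum_congr rfl fun τ hτ => by rw [hc τ hτ]

lemma supA_congr {i : Fin n} {σ : ℕ} (hψ : Ψ i σ = Ψ' i σ) :
    supA P Ψ i σ = supA P Ψ' i σ := by unfold supA; rw [hψ]

lemma wIn_congr {t : ℕ} {i : Fin n} {σ : ℕ} (hψ : Ψ i σ = Ψ' i σ) :
    wIn P Ψ t i σ = wIn P Ψ' t i σ := by unfold wIn; rw [supA_congr P Ψ Ψ' hψ]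

lemma rhatIn_congr {t : ℕ} {i : Fin n} {σ : ℕ} (hψ : Ψ i σ = Ψ' i σ)
    (hc : ∀ τ ∈ Ψ i σ, c τ i = c' τ i) :
    rhatIn P c Ψ t i σ = rhatIn P c' Ψ' t i σ := by
  unfold rhatIn
  rw [supA_congr P Ψ Ψ' hψ, supCvec_congr P c c' Ψ Ψ' hψ hc]

lemma scoreIn_congr {t : ℕ} {i : Fin n} {σ : ℕ} (hψ : Ψ i σ = Ψ' i σ)
    (hc : ∀ τ ∈ Ψ i σ, c τ i = c' τ i) :
    scoreIn P c Ψ t i σ = scoreIn P c' Ψ' t i σ := by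
  unfold scoreIn
  rw [rhatIn_congr P c c' Ψ Ψ' hψ hc, wIn_congr P Ψ Ψ' hψ]

variable {s : ℕ}

noncomputable def stepAct {n : ℕ} (b : Fin n → ℝ) (j : Fin n) (w sc : Fin n → ℝ)
    (Tv : ℝ) (σ : ℕ) (act : Finset (Fin n)) : Finset (Fin n) :=
  if (j ∈ act ∧ (2 : ℝ) ^ (-(σ : ℤ)) < w j) ∨
     (∀ i ∈ act, w i ≤ 1 / Tv) ∨
     ¬ (∀ i ∈ act, w i ≤ (2 : ℝ) ^ (-(σ : ℤ)))
  then act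
  else act.filter (fun i => ∀ a ∈ act, sc a - (2 : ℝ) ^ (1 - (σ : ℤ)) ≤ sc i)

lemma actIn_zero {t : ℕ} : actIn P c Ψ t 0 = Finset.univ := by rw [actIn]

lemma actIn_one {t : ℕ} : actIn P c Ψ t 1 = Finset.univ := by rw [actIn]

lemma actIn_succ_succ {t : ℕ} (σ : ℕ) :
    actIn P c Ψ t (σ + 2) = stepAct P.b (desig n t) (fun i => wIn P Ψ t i (σ + 1))
      (fun i => scoreIn P c Ψ t i (σ + 1)) (Real.sqrt P.T) (σ + 1)
      (actIn P c Ψ t (σ + 1)) := by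
  rw [actIn]
  · rfl
  · exact Nat.succ_ne_zero σ

lemma actIn_congr (HΨ : ∀ i σ, σ ≤ s → Ψ i σ = Ψ' i σ)
    (Hc : ∀ i σ, σ < s → ∀ τ ∈ Ψ i σ, c τ i = c' τ i) {t : ℕ} :
    ∀ σ, σ ≤ s → actIn P c Ψ t σ = actIn P c' Ψ' t σ := by
  intro σ
  induction σ with
  | zero => intro _; rw [actIn_zero, actIn_zero]
  | succ σ ih =>
    intro hσ
    match σ, ih with
    | 0, _ => rw [actIn_one, actIn_one]
    | σ + 1, ih =>
      have hle : σ + 1 ≤ s := Nat.le_of_succ_le hσ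
      have hlt : σ + 1 < s := hσ
      have hact := ih hle
      have hw : (fun i => wIn P Ψ t i (σ + 1)) = (fun i => wIn P Ψ' t i (σ + 1)) :=
        funext fun i => wIn_congr P Ψ Ψ' (HΨ i (σ + 1) hle)
      have hsc : (fun i => scoreIn P c Ψ t i (σ + 1)) =
          (fun i => scoreIn P c' Ψ' t i (σ + 1)) :=
        funext fun i => scoreIn_congr P c c' Ψ Ψ' (HΨ i (σ + 1) hle) (Hc i (σ + 1) hlt)
      rw [show σ + 1 + 1 = σ + 2 from rfl, actIn_succ_succ, actIn_succ_succ,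
        hact, hw, hsc]

lemma condI_congr (HΨ : ∀ i σ, σ ≤ s → Ψ i σ = Ψ' i σ)
    (Hc : ∀ i σ, σ < s → ∀ τ ∈ Ψ i σ, c τ i = c' τ i) {t σ : ℕ} (hσ : σ ≤ s) :
    condI P c Ψ t σ ↔ condI P c' Ψ' t σ := by
  unfold condI
  rw [actIn_congr P c c' Ψ Ψ' HΨ Hc σ hσ,
    wIn_congr P Ψ Ψ' (HΨ (desig n t) σ hσ)]

lemma condII_congr (HΨ : ∀ i σ, σ ≤ s → Ψ i σ = Ψ' i σ)
    (Hc : ∀ i σ, σ < s → ∀ τ ∈ Ψ i σ, c τ i = c' τ i) {t σ : ℕ} (hσ : σ ≤ s) :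
    condII P c Ψ t σ ↔ condII P c' Ψ' t σ := by
  unfold condII
  rw [actIn_congr P c c' Ψ Ψ' HΨ Hc σ hσ]
  exact forall₂_congr fun i _ => by rw [wIn_congr P Ψ Ψ' (HΨ i σ hσ)]

lemma condIII_congr (HΨ : ∀ i σ, σ ≤ s → Ψ i σ = Ψ' i σ)
    (Hc : ∀ i σ, σ < s → ∀ τ ∈ Ψ i σ, c τ i = c' τ i) {t σ : ℕ} (hσ : σ ≤ s) :
    condIII P c Ψ t σ ↔ condIII P c' Ψ' t σ := by
  unfold condIII
  rw [actIn_congr P c c' Ψ Ψ' HΨ Hc σ hσ]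
  exact forall₂_congr fun i _ => by rw [wIn_congr P Ψ Ψ' (HΨ i σ hσ)]

lemma fires_congr (HΨ : ∀ i σ, σ ≤ s → Ψ i σ = Ψ' i σ)
    (Hc : ∀ i σ, σ < s → ∀ τ ∈ Ψ i σ, c τ i = c' τ i) {t σ : ℕ} (hσ : σ ≤ s) :
    (condI P c Ψ t σ ∨ condII P c Ψ t σ ∨ ¬ condIII P c Ψ t σ) ↔
      (condI P c' Ψ' t σ ∨ condII P c' Ψ' t σ ∨ ¬ condIII P c' Ψ' t σ) := by
  rw [condI_congr P c c' Ψ Ψ' HΨ Hc hσ, condII_congr P c c' Ψ Ψ' HΨ Hc hσ,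
    condIII_congr P c c' Ψ Ψ' HΨ Hc hσ]

end Congr
section Stop
set_option linter.unusedSectionVars false
variable {n d : ℕ} [NeZero n] (P : SupParams n d) (c c' : ℕ → Fin n → Bool)
  (Ψ Ψ' : Fin n → ℕ → Finset ℕ)

/-- The stopping condition ("a rule fires") at stage `σ`. -/
def fires (t σ : ℕ) : Prop :=
  condI P c Ψ t σ ∨ condII P c Ψ t σ ∨ ¬ condIII P c Ψ t σ

lemma stopIn_def (t : ℕ) :
    stopIn P c Ψ t = (((Finset.Icc 1 P.S).filter (fires P c Ψ t)).min).untopD P.S := by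
  unfold stopIn
  exact congrArg (WithTop.untopD P.S)
    (congrArg Finset.min (Finset.filter_congr (fun x _ => Iff.rfl)))

lemma learnIn_eq_some_iff (hPS : 1 ≤ P.S) {t σ₀ : ℕ} :
    learnIn P c Ψ t = some σ₀ ↔
      σ₀ ∈ Finset.Icc 1 P.S ∧ condI P c Ψ t σ₀ ∧
        ∀ σ' ∈ Finset.Icc 1 P.S, σ' < σ₀ → ¬ fires P c Ψ t σ' := by
  have hstop : stopIn P c Ψ t = ((Finset.Icc 1 P.S).filter (fires P c Ψ t)).min.untopD P.S :=
    stopIn_def P c Ψ t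
  set F := (Finset.Icc 1 P.S).filter (fires P c Ψ t) with hF
  have hlearn : learnIn P c Ψ t =
      if condI P c Ψ t (stopIn P c Ψ t) then some (stopIn P c Ψ t) else none := rfl
  constructor
  · intro h
    rw [hlearn] at h
    split_ifs at h with hcond
    · rcases Option.some_inj.mp h with rfl
      rcases hm : F.min with _ | m
      · -- F empty
        have hFe : F = ∅ := Finset.min_eq_top.mp hm
        have hstop' : stopIn P c Ψ t = P.S := by rw [hstop, hm]; rfl
        rw [hstop']
        rw [hstop'] at hcond
        refine ⟨Finset.mem_Icc.mpr ⟨hPS, le_refl _⟩, hcond, ?_⟩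
        intro σ' hσ' _ hf
        have : σ' ∈ F := by rw [hF]; exact Finset.mem_filter.mpr ⟨hσ', hf⟩
        rw [hFe] at this; exact absurd this (Finset.notMem_empty σ')
      · have hstop' : stopIn P c Ψ t = m := by rw [hstop, hm]; rfl
        have hmF : m ∈ F := Finset.mem_of_min hm
        rw [hstop'] at hcond ⊢
        refine ⟨(Finset.mem_filter.mp hmF).1, hcond, ?_⟩
        intro σ' hσ' hlt hf
        have hσ'F : σ' ∈ F := Finset.mem_filter.mpr ⟨hσ', hf⟩
        have := Finset.min_le hσ'F
        rw [hm] at this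
        exact absurd (WithTop.coe_le_coe.mp this) (Nat.not_le_of_lt hlt)
  · rintro ⟨hmem, hcond, hmin⟩
    have hσ₀F : σ₀ ∈ F := Finset.mem_filter.mpr ⟨hmem, Or.inl hcond⟩
    have hne : F.min ≠ ⊤ := by
      intro h
      rw [Finset.min_eq_top.mp h] at hσ₀F
      exact absurd hσ₀F (Finset.notMem_empty σ₀)
    rcases hm : F.min with _ | m
    · exact absurd hm hne
    · have hmF : m ∈ F := Finset.mem_of_min hm
      have hle : m ≤ σ₀ := by
        have := Finset.min_le hσ₀F; rw [hm] at this; exact WithTop.coe_le_coe.mp this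
      have heq : m = σ₀ := by
        rcases Nat.lt_or_ge m σ₀ with hlt | hge
        · exact absurd (Finset.mem_filter.mp hmF).2
            (hmin m (Finset.mem_filter.mp hmF).1 hlt)
        · omega
      have hstop' : stopIn P c Ψ t = σ₀ := by rw [hstop, hm, heq]; rfl
      rw [hlearn, hstop', if_pos hcond]

variable {s : ℕ}

lemma learnIn_some_congr (HΨ : ∀ i σ, σ ≤ s → Ψ i σ = Ψ' i σ)
    (Hc : ∀ i σ, σ < s → ∀ τ ∈ Ψ i σ, c τ i = c' τ i)
    (hPS : 1 ≤ P.S) {t σ₀ : ℕ} (hσ₀ : σ₀ ≤ s) :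
    learnIn P c Ψ t = some σ₀ ↔ learnIn P c' Ψ' t = some σ₀ := by
  rw [learnIn_eq_some_iff P c Ψ hPS, learnIn_eq_some_iff P c' Ψ' hPS]
  have h1 := condI_congr P c c' Ψ Ψ' HΨ Hc (t := t) (σ := σ₀) hσ₀
  have h2 : ∀ σ' ∈ Finset.Icc 1 P.S, σ' < σ₀ →
      (fires P c Ψ t σ' ↔ fires P c' Ψ' t σ') := fun σ' _ hlt =>
    fires_congr P c c' Ψ Ψ' HΨ Hc (le_trans (Nat.le_of_lt hlt) hσ₀)
  constructor
  · rintro ⟨ha, hb, hc2⟩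
    exact ⟨ha, h1.mp hb, fun σ' hσ' hlt hf =>
      hc2 σ' hσ' hlt ((h2 σ' hσ' hlt).mpr hf)⟩
  · rintro ⟨ha, hb, hc2⟩
    exact ⟨ha, h1.mpr hb, fun σ' hσ' hlt hf =>
      hc2 σ' hσ' hlt ((h2 σ' hσ' hlt).mp hf)⟩

/-- Full congruence for `stopIn`, `learnIn`, `selectIn` when the index sets agree at all
stages and the clicks agree on all rounds in the index sets. -/
lemma stopIn_congr_full (HΨ : ∀ i σ, Ψ i σ = Ψ' i σ)
    (Hc : ∀ i σ, ∀ τ ∈ Ψ i σ, c τ i = c' τ i) {t : ℕ} :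
    stopIn P c Ψ t = stopIn P c' Ψ' t := by
  have hfilter : (Finset.Icc 1 P.S).filter (fires P c Ψ t) =
      (Finset.Icc 1 P.S).filter (fires P c' Ψ' t) := by
    apply Finset.filter_congr
    intro σ hσ
    exact fires_congr (s := σ) P c c' Ψ Ψ' (fun i σ' _ => HΨ i σ')
      (fun i σ' _ => Hc i σ') (le_refl σ)
  rw [stopIn_def, stopIn_def, hfilter]

lemma condI_congr_full (HΨ : ∀ i σ, Ψ i σ = Ψ' i σ)
    (Hc : ∀ i σ, ∀ τ ∈ Ψ i σ, c τ i = c' τ i) {t σ : ℕ} :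
    condI P c Ψ t σ ↔ condI P c' Ψ' t σ :=
  condI_congr (s := σ) P c c' Ψ Ψ' (fun i σ' _ => HΨ i σ') (fun i σ' _ => Hc i σ')
    (le_refl σ)

lemma learnIn_congr_full (HΨ : ∀ i σ, Ψ i σ = Ψ' i σ)
    (Hc : ∀ i σ, ∀ τ ∈ Ψ i σ, c τ i = c' τ i) {t : ℕ} :
    learnIn P c Ψ t = learnIn P c' Ψ' t := by
  have hstop := stopIn_congr_full P c c' Ψ Ψ' HΨ Hc (t := t)
  have hlearn : learnIn P c Ψ t =
      if condI P c Ψ t (stopIn P c Ψ t) then some (stopIn P c Ψ t) else none := rfl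
  have hlearn' : learnIn P c' Ψ' t =
      if condI P c' Ψ' t (stopIn P c' Ψ' t) then some (stopIn P c' Ψ' t) else none := rfl
  rw [hlearn, hlearn', hstop]
  by_cases h : condI P c' Ψ' t (stopIn P c' Ψ' t)
  · rw [if_pos h, if_pos ((condI_congr_full P c c' Ψ Ψ' HΨ Hc).mpr h)]
  · rw [if_neg h, if_neg (fun h' => h ((condI_congr_full P c c' Ψ Ψ' HΨ Hc).mp h'))]

lemma selectIn_congr_full (HΨ : ∀ i σ, Ψ i σ = Ψ' i σ)
    (Hc : ∀ i σ, ∀ τ ∈ Ψ i σ, c τ i = c' τ i) {t : ℕ} :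
    selectIn P c Ψ t = selectIn P c' Ψ' t := by
  have hstop := stopIn_congr_full P c c' Ψ Ψ' HΨ Hc (t := t)
  have hact := actIn_congr (s := stopIn P c' Ψ' t) P c c' Ψ Ψ'
    (fun i σ' _ => HΨ i σ') (fun i σ' _ => Hc i σ') (t := t) (stopIn P c' Ψ' t) (le_refl _)
  have hsc : ∀ i, scoreIn P c Ψ t i (stopIn P c' Ψ' t) =
      scoreIn P c' Ψ' t i (stopIn P c' Ψ' t) := fun i =>
    scoreIn_congr P c c' Ψ Ψ' (HΨ i _) (Hc i _)
  unfold selectIn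
  simp only
  rw [hstop, hact]
  by_cases h : condI P c' Ψ' t (stopIn P c' Ψ' t)
  · rw [if_pos h, if_pos ((condI_congr_full P c c' Ψ Ψ' HΨ Hc).mpr h)]
  · rw [if_neg h, if_neg (fun h' => h ((condI_congr_full P c c' Ψ Ψ' HΨ Hc).mp h'))]
    congr 1
    apply congrArg
    apply Finset.filter_congr
    intro i _
    constructor
    · intro hall a ha; rw [← hsc a, ← hsc i]; exact hall a ha
    · intro hall a ha; rw [hsc a, hsc i]; exact hall a ha

end Stop
section Trunc
set_option linter.unusedSectionVars false
variable {n d : ℕ} [NeZero n] (P : SupParams n d) (c c' : ℕ → Fin n → Bool)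

lemma supPsi_succ_none {t : ℕ} (h : learnIn P c (supPsi P c t) t = none) :
    supPsi P c (t + 1) = supPsi P c t := by
  rw [supPsi_succ, h]

lemma supPsi_succ_some {t s0 : ℕ} (h : learnIn P c (supPsi P c t) t = some s0) :
    supPsi P c (t + 1) = fun i s' =>
      if i = desig n t ∧ s' = s0 then insert t (supPsi P c t i s')
      else supPsi P c t i s' := by
  rw [supPsi_succ, h]

lemma supSelect_eq_desig {t σ : ℕ} (h : learnIn P c (supPsi P c t) t = some σ) :
    supSelect P c t = desig n t := by
  have hcond : condI P c (supPsi P c t) t (stopIn P c (supPsi P c t) t) := by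
    by_contra hc
    have : learnIn P c (supPsi P c t) t = none := if_neg hc
    rw [this] at h; cases h
  show selectIn P c (supPsi P c t) t = desig n t
  unfold selectIn
  simp only
  rw [if_pos hcond]

lemma supPsi_congr_trunc {v : ℕ} (H : ∀ τ, τ < v → ∀ j, c τ j = c' τ j) :
    supPsi P c v = supPsi P c' v := by
  induction v with
  | zero => rfl
  | succ v ih =>
    have hΨ : supPsi P c v = supPsi P c' v :=
      ih fun τ hτ j => H τ (Nat.lt_succ_of_lt hτ) j
    have hlearn : learnIn P c (supPsi P c v) v = learnIn P c' (supPsi P c' v) v := by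
      rw [← hΨ]
      exact learnIn_congr_full P c c' _ _ (fun _ _ => rfl)
        (fun i σ τ hτ => H τ (Nat.lt_succ_of_lt (mem_supPsi_lt P c hτ)) i)
    rcases hL : learnIn P c (supPsi P c v) v with _ | s0
    · rw [supPsi_succ_none P c hL, supPsi_succ_none P c' (by rw [← hlearn, hL]), hΨ]
    · rw [supPsi_succ_some P c hL, supPsi_succ_some P c' (by rw [← hlearn, hL]), hΨ]

lemma supSelect_congr_trunc {t : ℕ} (H : ∀ τ, τ < t → ∀ j, c τ j = c' τ j) :
    supSelect P c t = supSelect P c' t := by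
  unfold supSelect
  have hΨ : supPsi P c t = supPsi P c' t := supPsi_congr_trunc P c c' H
  rw [← hΨ]
  exact selectIn_congr_full P c c' _ _ (fun _ _ => rfl)
    (fun i σ τ hτ => H τ (mem_supPsi_lt P c hτ) i)

end Trunc

section Masked
set_option linter.unusedSectionVars false
variable {n d : ℕ} [NeZero n] (P : SupParams n d) (c c' : ℕ → Fin n → Bool)
  {s : ℕ} {E : Finset ℕ} {g : ℕ → Fin n}

lemma Hc_masked (hdiff : ∀ τ j, c τ j ≠ c' τ j → τ ∈ E ∧ j = g τ)
    (hmem : ∀ t ∈ E, t ∈ supPsi P c P.T (g t) s) :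
    ∀ v i σ, σ < s → ∀ τ ∈ supPsi P c v i σ, c τ i = c' τ i := by
  intro v i σ hσ τ hτ
  by_contra hne
  obtain ⟨hτE, hgi⟩ := hdiff τ i hne
  subst hgi
  have h1 := ((mem_supPsi_iff P c).mp hτ).2.1
  have h2 := ((mem_supPsi_iff P c).mp (hmem τ hτE)).2.1
  rw [h1] at h2
  cases h2
  omega

lemma supPsi_congr_masked (hPS : 1 ≤ P.S)
    (hdiff : ∀ τ j, c τ j ≠ c' τ j → τ ∈ E ∧ j = g τ)
    (hmem : ∀ t ∈ E, t ∈ supPsi P c P.T (g t) s) :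
    ∀ v i σ, σ ≤ s → supPsi P c v i σ = supPsi P c' v i σ := by
  intro v
  induction v with
  | zero => intro i σ _; rfl
  | succ v ih =>
    have HΨ : ∀ i σ, σ ≤ s → supPsi P c v i σ = supPsi P c' v i σ := ih
    have Hc : ∀ i σ, σ < s → ∀ τ ∈ supPsi P c v i σ, c τ i = c' τ i :=
      fun i σ hσ => Hc_masked P c c' hdiff hmem v i σ hσ
    have hiff : ∀ σ₀, σ₀ ≤ s →
        (learnIn P c (supPsi P c v) v = some σ₀ ↔
          learnIn P c' (supPsi P c' v) v = some σ₀) :=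
      fun σ₀ hσ₀ => learnIn_some_congr P c c' _ _ HΨ Hc hPS hσ₀
    intro i σ hσ
    rcases hL : learnIn P c (supPsi P c v) v with _ | s0
    · rw [supPsi_succ_none P c hL]
      rcases hL' : learnIn P c' (supPsi P c' v) v with _ | s1
      · rw [supPsi_succ_none P c' hL']; exact HΨ i σ hσ
      · have hs1 : ¬ s1 ≤ s := fun h => by rw [(hiff s1 h).mpr hL'] at hL; cases hL
        rw [supPsi_succ_some P c' hL']
        simp only
        rw [if_neg (by rintro ⟨-, rfl⟩; exact hs1 hσ)]
        exact HΨ i σ hσ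
    · by_cases hs0 : s0 ≤ s
      · have hL2 := (hiff s0 hs0).mp hL
        rw [supPsi_succ_some P c hL, supPsi_succ_some P c' hL2]
        simp only
        by_cases hcase : i = desig n v ∧ σ = s0
        · rw [if_pos hcase, if_pos hcase, HΨ i σ hσ]
        · rw [if_neg hcase, if_neg hcase]; exact HΨ i σ hσ
      · rw [supPsi_succ_some P c hL]
        simp only
        rw [if_neg (by rintro ⟨-, rfl⟩; exact hs0 hσ)]
        rcases hL' : learnIn P c' (supPsi P c' v) v with _ | s1
        · rw [supPsi_succ_none P c' hL']; exact HΨ i σ hσ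
        · have hs1 : ¬ s1 ≤ s := fun h => by
            rw [(hiff s1 h).mpr hL'] at hL
            cases hL
            omega
          rw [supPsi_succ_some P c' hL']
          simp only
          rw [if_neg (by rintro ⟨-, rfl⟩; exact hs1 hσ)]
          exact HΨ i σ hσ

lemma Q_invariant (hPS : 1 ≤ P.S)
    (hdiff : ∀ τ j, c τ j ≠ c' τ j → τ ∈ E ∧ j = g τ)
    (hQ : ∀ t ∈ E, supSelect P c t = g t ∧ t ∈ supPsi P c P.T (g t) s) :
    ∀ t ∈ E, supSelect P c' t = g t ∧ t ∈ supPsi P c' P.T (g t) s := by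
  have hmem : ∀ t ∈ E, t ∈ supPsi P c P.T (g t) s := fun t ht => (hQ t ht).2
  have hmain := supPsi_congr_masked P c c' hPS hdiff hmem
  intro t ht
  have hmem' : t ∈ supPsi P c' P.T (g t) s := by
    rw [← hmain P.T (g t) s (le_refl s)]; exact hmem t ht
  refine ⟨?_, hmem'⟩
  have h1 : learnIn P c (supPsi P c t) t = some s :=
    ((mem_supPsi_iff P c).mp (hmem t ht)).2.1
  have h1' : learnIn P c' (supPsi P c' t) t = some s := by
    rw [← learnIn_some_congr P c c' (supPsi P c t) (supPsi P c' t)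
      (fun i σ hσ => hmain t i σ hσ)
      (fun i σ hσ => Hc_masked P c c' hdiff hmem t i σ hσ) hPS (le_refl s)]
    exact h1
  rw [supSelect_eq_desig P c' h1']
  have hg := (hQ t ht).1
  rw [supSelect_eq_desig P c h1] at hg
  exact hg

end Masked
section Measure
variable {n d : ℕ} [NeZero n]

/-- `Q`-truncation: the event property only depends on clicks at rounds `< T`. -/
lemma Q_congr_trunc (P : SupParams n d) (c c' : ℕ → Fin n → Bool)
    {s : ℕ} {E : Finset ℕ} {g : ℕ → Fin n} (hE : ∀ t ∈ E, t < P.T)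
    (H : ∀ τ, τ < P.T → ∀ j, c τ j = c' τ j) :
    (∀ t ∈ E, supSelect P c t = g t ∧ t ∈ supPsi P c P.T (g t) s) ↔
      (∀ t ∈ E, supSelect P c' t = g t ∧ t ∈ supPsi P c' P.T (g t) s) := by
  apply forall₂_congr
  intro t ht
  rw [supSelect_congr_trunc P c c' (fun τ hτ j => H τ (lt_trans hτ (hE t ht)) j),
    supPsi_congr_trunc P c c' (fun τ hτ j => H τ hτ j)]

end Measure
/-- **Lemma 3 (after Chu et al., Lemma 4).** In SupLinUCB-S, for each stage
`s ∈ {1, …, S}` and any fixed sequence of context vectors: restricted to the rounds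
`t` with `t ∈ Ψ_{I_t,t}^s` (the rounds added to a stage-`s` index set), the
corresponding rewards `r_{I_t,t}` are independent random variables with
`E[r_{I_t,t}] = θ_{I_t}ᵀ x_t`.

Formalization: the clicks `click · t i` are independent Bernoulli random variables
with means `θ_iᵀ x_t`; for any finite set `E` of rounds and any assignment
`g : ℕ → Fin n` of agents, conditionally on the event `A` that for every `t ∈ E`
the algorithm selected `I_t = g t` and added `t` to the stage-`s` index set of
`g t`, the rewards `(r_{g t, t})_{t ∈ E}` are independent with conditional
expectation `θ_{g t}ᵀ x_t`. -/
theorem suplinucb_s_rewards_conditionally_independent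
    {n d : ℕ} [NeZero n] (P : SupParams n d) (θ : Fin n → Fin d → ℝ)
    {Ω : Type*} [MeasurableSpace Ω] (Pr : Measure Ω) [IsProbabilityMeasure Pr]
    (click : Ω → ℕ → Fin n → Bool)
    (hmeas : ∀ t i, Measurable fun ω => click ω t i)
    (hind : iIndepFun
      (fun (p : ℕ × Fin n) ω => click ω p.1 p.2) Pr)
    (hmean : ∀ t i, (Pr {ω | click ω t i = true}).toReal = θ i ⬝ᵥ P.x t)
    (hθx : ∀ i t, θ i ⬝ᵥ P.x t ∈ Set.Icc (0 : ℝ) 1)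
    (s : ℕ) (hs : s ∈ Finset.Icc 1 P.S)
    (E : Finset ℕ) (hE : ∀ t ∈ E, t < P.T) (g : ℕ → Fin n)
    (A : Set Ω)
    (hA : A = {ω | ∀ t ∈ E,
      supSelect P (click ω) t = g t ∧ t ∈ supPsi P (click ω) P.T (g t) s})
    (hpos : Pr A ≠ 0) :
    iIndepFun
        (fun (t : E) (ω : Ω) => (if click ω t (g t) then (1 : ℝ) else 0))
        (ProbabilityTheory.cond Pr A) ∧
      ∀ t ∈ E,
        ∫ ω, (if click ω t (g t) then (1 : ℝ) else 0) ∂(ProbabilityTheory.cond Pr A) =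
          θ (g t) ⬝ᵥ P.x t := by
  obtain ⟨hs1, hsS⟩ := Finset.mem_Icc.mp hs
  have hPS : 1 ≤ P.S := le_trans hs1 hsS
  set Q : (ℕ → Fin n → Bool) → Prop := fun c =>
    ∀ t ∈ E, supSelect P c t = g t ∧ t ∈ supPsi P c P.T (g t) s with hQdef
  set D : Finset (ℕ × Fin n) := E.image (fun t => (t, g t)) with hD
  set D' : Finset (ℕ × Fin n) :=
    (Finset.range P.T ×ˢ (Finset.univ : Finset (Fin n))) \ D with hD'
  have hDmem : ∀ t : ℕ, t ∈ E → (t, g t) ∈ D := fun t ht =>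
    Finset.mem_image_of_mem _ ht
  have hDspec : ∀ p : ℕ × Fin n, p ∈ D → p.1 ∈ E ∧ p.2 = g p.1 := by
    intro p hp
    obtain ⟨t, ht, rfl⟩ := Finset.mem_image.mp hp
    exact ⟨ht, rfl⟩
  -- masking: Q only depends on the D'-coordinates of the click array
  have hQmask : ∀ c : ℕ → Fin n → Bool,
      Q c ↔ Q (fun τ j => if (τ, j) ∈ D' then c τ j else false) := by
    intro c
    set ctr : ℕ → Fin n → Bool := fun τ j => if τ < P.T then c τ j else false with hctr
    set cm : ℕ → Fin n → Bool := fun τ j => if (τ, j) ∈ D' then c τ j else false with hcm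
    have step1 : Q c ↔ Q ctr :=
      Q_congr_trunc P c ctr hE (fun τ hτ j => by simp [hctr, hτ])
    have hdiff : ∀ τ j, ctr τ j ≠ cm τ j → τ ∈ E ∧ j = g τ := by
      intro τ j hne
      by_contra hcon
      apply hne
      have hnd : (τ, j) ∉ D := fun hd => hcon (hDspec (τ, j) hd)
      by_cases hτT : τ < P.T
      · have : (τ, j) ∈ D' := by
          rw [hD']
          exact Finset.mem_sdiff.mpr
            ⟨Finset.mem_product.mpr ⟨Finset.mem_range.mpr hτT, Finset.mem_univ j⟩, hnd⟩
        simp [hctr, hcm, hτT, this]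
      · have : (τ, j) ∉ D' := by
          rw [hD']
          intro hmem
          exact hτT (Finset.mem_range.mp (Finset.mem_product.mp
            (Finset.mem_sdiff.mp hmem).1).1)
        simp [hctr, hcm, hτT, this]
    have step2 : Q ctr ↔ Q cm :=
      ⟨fun h => Q_invariant P ctr cm hPS hdiff h,
       fun h => Q_invariant P cm ctr hPS (fun τ j hne => hdiff τ j (Ne.symm hne)) h⟩
    exact step1.trans step2
  -- A as preimage of a set of D'-tuples
  set X : Ω → ({p // p ∈ D} → Bool) := fun ω p => click ω p.1.1 p.1.2 with hX
  set Y : Ω → ({p // p ∈ D'} → Bool) := fun ω p => click ω p.1.1 p.1.2 with hY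
  set SA : Set ({p // p ∈ D'} → Bool) :=
    {v | Q (fun τ j => if h : (τ, j) ∈ D' then v ⟨(τ, j), h⟩ else false)} with hSA
  have hAeq : A = Y ⁻¹' SA := by
    rw [hA]
    ext ω
    have : (fun τ j => if (τ, j) ∈ D' then click ω τ j else false) =
        (fun τ j => if h : (τ, j) ∈ D' then Y ω ⟨(τ, j), h⟩ else false) := by
      funext τ j
      by_cases h : (τ, j) ∈ D' <;> simp [h, hY]
    constructor
    · intro h
      show Q _
      rw [← this]
      exact (hQmask (click ω)).mp h
    · intro h
      have : Q (fun τ j => if (τ, j) ∈ D' then click ω τ j else false) := by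
        rw [this]; exact h
      exact (hQmask (click ω)).mpr this
  have hXmeas : Measurable X := measurable_pi_lambda _ (fun p => hmeas p.1.1 p.1.2)
  have hYmeas : Measurable Y := measurable_pi_lambda _ (fun p => hmeas p.1.1 p.1.2)
  have hSAmeas : MeasurableSet SA := (Set.to_countable SA).measurableSet
  have hAmeas : MeasurableSet A := hAeq ▸ hYmeas hSAmeas
  have hindXY : IndepFun X Y Pr :=
    hind.indepFun_finset D D' Finset.disjoint_sdiff (fun p => hmeas p.1 p.2)
  have hPrAne : Pr A ≠ ⊤ := measure_ne_top Pr A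
  -- conditional probability of X-measurable events equals unconditional
  have hcondX : ∀ SB : Set ({p // p ∈ D} → Bool),
      ProbabilityTheory.cond Pr A (X ⁻¹' SB) = Pr (X ⁻¹' SB) := by
    intro SB
    have hfact : Pr (X ⁻¹' SB ∩ A) = Pr (X ⁻¹' SB) * Pr A := by
      rw [hAeq]
      exact hindXY.measure_inter_preimage_eq_mul SB SA
        ((Set.to_countable SB).measurableSet) hSAmeas
    rw [ProbabilityTheory.cond_apply hAmeas, Set.inter_comm, hfact,
      ← mul_assoc, mul_comm ((Pr A)⁻¹), mul_assoc, ENNReal.inv_mul_cancel hpos hPrAne,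
      mul_one]
  -- single events
  have hsingle : ∀ (t : {x // x ∈ E}) (C : Set Bool),
      ProbabilityTheory.cond Pr A ((fun ω => click ω (t : ℕ) (g t)) ⁻¹' C) =
        Pr ((fun ω => click ω (t : ℕ) (g t)) ⁻¹' C) := by
    intro t C
    have h1 : ((fun ω => click ω (t : ℕ) (g t)) ⁻¹' C) =
        X ⁻¹' {v | v ⟨((t : ℕ), g t), hDmem t t.2⟩ ∈ C} := rfl
    rw [h1, hcondX]
  -- product formula
  have hbig : ∀ (S : Finset {x // x ∈ E}) (C : {x // x ∈ E} → Set Bool),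
      Pr (⋂ t ∈ S, (fun ω => click ω (t : ℕ) (g t)) ⁻¹' C t) =
        ∏ t ∈ S, Pr ((fun ω => click ω (t : ℕ) (g t)) ⁻¹' C t) := by
    intro S C
    set f0 : {x // x ∈ E} → ℕ × Fin n := fun t => ((t : ℕ), g t) with hf0
    set Call : ℕ × Fin n → Set Bool :=
      fun p => if h : p.1 ∈ E then C ⟨p.1, h⟩ else Set.univ with hCall
    have hinj : ∀ x ∈ S, ∀ y ∈ S, f0 x = f0 y → x = y := by
      intro x _ y _ hxy
      exact Subtype.ext (congrArg Prod.fst hxy)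
    have hCf0 : ∀ t : {x // x ∈ E}, Call (f0 t) = C t := by
      intro t
      simp only [hCall, hf0]
      rw [dif_pos t.2]
    have key := hind.measure_inter_preimage_eq_mul (S := S.image f0) (sets := Call)
      (fun p _ => (Set.to_countable _).measurableSet)
    have hI : (⋂ p ∈ S.image f0, (fun ω => click ω p.1 p.2) ⁻¹' Call p) =
        ⋂ t ∈ S, (fun ω => click ω (t : ℕ) (g t)) ⁻¹' C t := by
      ext ω
      simp only [Set.mem_iInter, Set.mem_preimage, Finset.mem_image]
      constructor
      · intro h t ht
        have := h (f0 t) ⟨t, ht, rfl⟩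
        rw [hCf0 t] at this
        exact this
      · rintro h p ⟨t, ht, rfl⟩
        rw [hCf0 t]
        exact h t ht
    have hP : ∏ p ∈ S.image f0, Pr ((fun ω => click ω p.1 p.2) ⁻¹' Call p) =
        ∏ t ∈ S, Pr ((fun ω => click ω (t : ℕ) (g t)) ⁻¹' C t) := by
      rw [Finset.prod_image hinj]
      exact Finset.prod_congr rfl fun t _ => by rw [hCf0 t]
    rw [hI] at key
    rw [key, hP]
  constructor
  · rw [iIndepFun_iff_measure_inter_preimage_eq_mul]
    intro S sets hsets
    set C : {x // x ∈ E} → Set Bool :=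
      fun t => (fun x : Bool => if x then (1 : ℝ) else 0) ⁻¹' sets t with hC
    have h1 : (⋂ t ∈ S,
        (fun ω : Ω => if click ω (t : ℕ) (g t) then (1 : ℝ) else 0) ⁻¹' sets t) =
        X ⁻¹' {v | ∀ t ∈ S, v ⟨((t : ℕ), g t), hDmem t t.2⟩ ∈ C t} := by
      ext ω
      simp only [Set.mem_iInter, Set.mem_preimage, Set.mem_setOf_eq]
      exact Iff.rfl
    have h2 : ProbabilityTheory.cond Pr A (⋂ t ∈ S,
        (fun ω : Ω => if click ω (t : ℕ) (g t) then (1 : ℝ) else 0) ⁻¹' sets t) =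
        Pr (⋂ t ∈ S,
        (fun ω : Ω => if click ω (t : ℕ) (g t) then (1 : ℝ) else 0) ⁻¹' sets t) := by
      rw [h1, hcondX, ← h1]
    have h4 : ∀ t ∈ S, ProbabilityTheory.cond Pr A
        ((fun ω : Ω => if click ω (t : ℕ) (g t) then (1 : ℝ) else 0) ⁻¹' sets t) =
        Pr ((fun ω => click ω (t : ℕ) (g t)) ⁻¹' C t) := fun t _ => hsingle t (C t)
    rw [h2, Finset.prod_congr rfl h4]
    exact hbig S C
  · intro t ht
    have hif : (fun ω => if click ω t (g t) then (1 : ℝ) else 0) =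
        fun ω => Set.indicator ((fun ω => click ω t (g t)) ⁻¹' {true})
          (fun _ => (1 : ℝ)) ω := by
      funext ω
      by_cases h : click ω t (g t) <;> simp [Set.indicator_apply, h]
    rw [show (∫ ω, (if click ω t (g t) then (1 : ℝ) else 0)
        ∂(ProbabilityTheory.cond Pr A)) =
        ∫ ω, Set.indicator ((fun ω => click ω t (g t)) ⁻¹' {true})
          (fun _ => (1 : ℝ)) ω ∂(ProbabilityTheory.cond Pr A) from by rw [← hif]]
    rw [MeasureTheory.integral_indicator_const (1 : ℝ)
      ((hmeas t (g t)) (measurableSet_singleton true))]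
    have := hsingle ⟨t, ht⟩ {true}
    simp only [Subtype.coe_mk] at this
    rw [measureReal_def, this]
    have hset : ((fun ω => click ω t (g t)) ⁻¹' {true}) =
        {ω | click ω t (g t) = true} := by
      ext ω; simp
    rw [hset, smul_eq_mul, mul_one, hmean t (g t)]
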